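/- Let θ > 0 and let X be a nonnegative random variable whose cdf F satisfies c₁·exp(-C₁·y^{-θ}) ≤ F(y) ≤ K·exp(-C₂·y^{-θ}) for 0 < y ≤ 1 (constants c₁, C₁, K, C₂ > 0). Then the negative moments η_k = E[X^{-k}] satisfy log η_k = (k/θ)·log k + o(k·log k) as k → ∞. -/

import Mathlib

open MeasureTheory Real Filter Asymptotics Set


lemma nmA_null {Ω : Type*} [MeasurableSpace Ω]
    (μ : Measure Ω) [IsProbabilityMeasure μ] (X : Ω → ℝ)
    (θ K C₂ : ℝ) (hθ : 0 < θ) (hK : 0 < K) (hC₂ : 0 < C₂)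
    (hFub : ∀ y : ℝ, 0 < y → y ≤ 1 →
      (μ {ω | X ω ≤ y}).toReal ≤ K * Real.exp (-C₂ * y ^ (-θ))) :
    μ {ω | X ω = 0} = 0 := by
  have h1 : ∀ n : ℕ, 1 ≤ n →
      (μ {ω | X ω = 0}).toReal ≤ K * Real.exp (-C₂ * (n : ℝ) ^ θ) := by
    intro n hn
    have hn0 : (0:ℝ) < (n : ℝ) := by exact_mod_cast hn
    have hinv : (0:ℝ) < (n : ℝ)⁻¹ := by positivity
    have hinv1 : (n : ℝ)⁻¹ ≤ 1 := by
      rw [inv_le_one_iff₀]; right; exact_mod_cast hn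
    have hsub : {ω | X ω = 0} ⊆ {ω | X ω ≤ (n : ℝ)⁻¹} := by
      intro ω hω; simp only [Set.mem_setOf_eq] at *; rw [hω]; positivity
    have hmono := ENNReal.toReal_mono (measure_ne_top μ _) (measure_mono hsub)
    have hub := hFub _ hinv hinv1
    have hrw : ((n : ℝ)⁻¹) ^ (-θ) = (n : ℝ) ^ θ := by
      rw [Real.inv_rpow hn0.le, Real.rpow_neg hn0.le, inv_inv]
    rw [hrw] at hub
    linarith
  have h2 : Tendsto (fun n : ℕ => K * Real.exp (-C₂ * (n : ℝ) ^ θ)) atTop (nhds 0) := by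
    have ha : Tendsto (fun n : ℕ => (n : ℝ) ^ θ) atTop atTop :=
      (tendsto_rpow_atTop hθ).comp tendsto_natCast_atTop_atTop
    have hb : Tendsto (fun n : ℕ => -C₂ * (n : ℝ) ^ θ) atTop atBot := by
      exact Tendsto.const_mul_atTop_of_neg (neg_neg_iff_pos.mpr hC₂) ha
    have hc : Tendsto (fun n : ℕ => Real.exp (-C₂ * (n : ℝ) ^ θ)) atTop (nhds 0) :=
      Real.tendsto_exp_atBot.comp hb
    simpa using hc.const_mul K
  have h3 : (μ {ω | X ω = 0}).toReal ≤ 0 :=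
    ge_of_tendsto h2 (eventually_atTop.2 ⟨1, h1⟩)
  have h4 : (μ {ω | X ω = 0}).toReal = 0 := le_antisymm h3 ENNReal.toReal_nonneg
  rw [ENNReal.toReal_eq_zero_iff] at h4
  exact h4.resolve_right (measure_ne_top μ _)


lemma nmB_upper {Ω : Type*} [MeasurableSpace Ω]
    (μ : Measure Ω) [IsProbabilityMeasure μ]
    (X : Ω → ℝ) (hXm : Measurable X) (hX0 : ∀ ω, 0 ≤ X ω)
    (θ K C₂ : ℝ) (hθ : 0 < θ) (hK : 0 < K) (hC₂ : 0 < C₂)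
    (hFub : ∀ y : ℝ, 0 < y → y ≤ 1 →
      (μ {ω | X ω ≤ y}).toReal ≤ K * Real.exp (-C₂ * y ^ (-θ)))
    (k : ℕ) (hk : 1 ≤ k) :
    Integrable (fun ω => X ω ^ (-(k : ℝ))) μ ∧
      ∫ ω, X ω ^ (-(k : ℝ)) ∂μ ≤
        1 + K * ((Nat.ceil ((k:ℝ)/θ) + 1).factorial : ℝ)
          * C₂⁻¹ ^ (Nat.ceil ((k:ℝ)/θ) + 1) * ((k:ℝ)/θ) := by
  set m : ℕ := Nat.ceil ((k:ℝ)/θ) + 1 with hm_def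
  have hk0 : (0:ℝ) < k := by exact_mod_cast hk
  set f : Ω → ℝ := fun ω => X ω ^ (-(k : ℝ)) with hf_def
  have f_nn : ∀ ω, 0 ≤ f ω := fun ω => Real.rpow_nonneg (hX0 ω) _
  have f_m : Measurable f := by fun_prop
  set p : ℝ := (m : ℝ) * θ / k with hp_def
  have hmθ : (k : ℝ) + θ ≤ (m : ℝ) * θ := by
    have h1 : (k : ℝ)/θ ≤ (Nat.ceil ((k:ℝ)/θ) : ℝ) := Nat.le_ceil _
    have h2 : (m : ℝ) = (Nat.ceil ((k:ℝ)/θ) : ℝ) + 1 := by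
      rw [hm_def]; push_cast; ring
    rw [h2]
    have := (div_le_iff₀ hθ).mp h1
    nlinarith
  have hp1 : 1 < p := by
    rw [hp_def, lt_div_iff₀ hk0]
    nlinarith
  set c : ℝ := K * (m.factorial : ℝ) * C₂⁻¹ ^ m with hc_def
  have hc0 : 0 < c := by
    have : (0:ℝ) < (m.factorial : ℝ) := by exact_mod_cast m.factorial_pos
    positivity
  -- layer cake
  have hlc : ∫⁻ ω, ENNReal.ofReal (f ω) ∂μ = ∫⁻ t in Ioi (0:ℝ), μ {ω | t < f ω} :=
    lintegral_eq_lintegral_meas_lt μ (Eventually.of_forall f_nn) f_m.aemeasurable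
  -- pointwise bound on (1, ∞)
  have hpt : ∀ t : ℝ, t ∈ Ioi (1:ℝ) →
      μ {ω | t < f ω} ≤ ENNReal.ofReal (c * t ^ (-p)) := by
    intro t ht
    rw [mem_Ioi] at ht
    have ht0 : (0:ℝ) < t := lt_trans one_pos ht
    set y : ℝ := t ^ (-(k:ℝ)⁻¹) with hy_def
    have hy0 : 0 < y := Real.rpow_pos_of_pos ht0 _
    have hy1 : y ≤ 1 :=
      (Real.rpow_lt_one_of_one_lt_of_neg ht (neg_lt_zero.mpr (by positivity))).le
    have hyk : y ^ (-(k:ℝ)) = t := by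
      rw [hy_def, ← Real.rpow_mul ht0.le,
        show (-(k:ℝ)⁻¹) * (-(k:ℝ)) = (k:ℝ)⁻¹ * k by ring,
        inv_mul_cancel₀ (ne_of_gt hk0), Real.rpow_one]
    have hsub : {ω | t < f ω} ⊆ {ω | X ω ≤ y} := by
      intro ω hω
      simp only [hf_def, Set.mem_setOf_eq] at *
      by_contra hcon
      push_neg at hcon
      have : X ω ^ (-(k:ℝ)) < y ^ (-(k:ℝ)) :=
        Real.rpow_lt_rpow_of_neg hy0 hcon (neg_lt_zero.mpr hk0)
      rw [hyk] at this
      exact absurd (lt_trans hω this) (lt_irrefl t)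
    have hyt : y ^ (-θ) = t ^ (θ / k) := by
      rw [hy_def, ← Real.rpow_mul ht0.le]
      congr 1
      field_simp
    have hmeas := ENNReal.toReal_mono (measure_ne_top μ _) (measure_mono hsub)
    have hub := hFub y hy0 hy1
    rw [hyt] at hub
    -- real inequality: K * exp (-C₂ * t^(θ/k)) ≤ c * t^(-p)
    have hreal : K * Real.exp (-C₂ * t ^ (θ / k)) ≤ c * t ^ (-p) := by
      set u : ℝ := C₂ * t ^ (θ / k) with hu_def
      have htk : 0 < t ^ (θ / k) := Real.rpow_pos_of_pos ht0 _
      have hu0 : 0 < u := by positivity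
      have hterm : u ^ m / (m.factorial : ℝ) ≤ Real.exp u := by
        refine le_trans ?_ (Real.sum_le_exp_of_nonneg hu0.le (m + 1))
        have he : u ^ m / (m.factorial : ℝ) = ∑ i ∈ {m}, u ^ i / (i.factorial : ℝ) := by
          simp
        rw [he]
        apply Finset.sum_le_sum_of_subset_of_nonneg
        · intro i hi
          simp only [Finset.mem_singleton] at hi
          simp [hi, Nat.lt_succ_self]
        · intro i _ _
          positivity
      have hum : 0 < u ^ m := by positivity
      have hterm' : 0 < u ^ m / (m.factorial : ℝ) := by
        have : (0:ℝ) < (m.factorial : ℝ) := by exact_mod_cast m.factorial_pos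
        positivity
      have hinv : Real.exp (-u) ≤ (m.factorial : ℝ) / u ^ m := by
        rw [Real.exp_neg, ← inv_div]
        exact inv_anti₀ hterm' hterm
      have hum_eq : u ^ m = C₂ ^ m * t ^ p := by
        rw [hu_def, mul_pow]
        congr 1
        rw [← Real.rpow_natCast (t ^ (θ / k)) m, ← Real.rpow_mul ht0.le]
        congr 1
        rw [hp_def]
        field_simp
      have htp : 0 < t ^ p := Real.rpow_pos_of_pos ht0 _
      have hfin : (m.factorial : ℝ) / u ^ m = (m.factorial : ℝ) * C₂⁻¹ ^ m * t ^ (-p) := by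
        rw [hum_eq, Real.rpow_neg ht0.le, inv_pow]
        field_simp
      calc K * Real.exp (-C₂ * t ^ (θ / k)) = K * Real.exp (-u) := by
            rw [hu_def]; ring_nf
        _ ≤ K * ((m.factorial : ℝ) / u ^ m) := mul_le_mul_of_nonneg_left hinv hK.le
        _ = c * t ^ (-p) := by rw [hfin, hc_def]; ring
    calc μ {ω | t < f ω} = ENNReal.ofReal ((μ {ω | t < f ω}).toReal) :=
          (ENNReal.ofReal_toReal (measure_ne_top μ _)).symm
      _ ≤ ENNReal.ofReal (c * t ^ (-p)) :=
          ENNReal.ofReal_le_ofReal (le_trans hmeas (le_trans hub hreal))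
  -- the tail integral
  have hintOn : IntegrableOn (fun t : ℝ => c * t ^ (-p)) (Ioi (1:ℝ)) :=
    (integrableOn_Ioi_rpow_of_lt (by linarith) one_pos).const_mul c
  have hIoi_nn : 0 ≤ᵐ[volume.restrict (Ioi (1:ℝ))] fun t : ℝ => c * t ^ (-p) := by
    filter_upwards [ae_restrict_mem measurableSet_Ioi] with t ht
    have : (0:ℝ) < t := lt_trans one_pos ht
    positivity
  have hθk : θ / (k:ℝ) ≤ p - 1 := by
    have h3 : (θ + k)/(k:ℝ) ≤ ((m:ℝ)*θ)/k := by gcongr; linarith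
    have h4 : (θ + k)/(k:ℝ) = θ/k + 1 := by
      rw [add_div, div_self (ne_of_gt hk0)]
    rw [hp_def]; linarith
  have hIval : ∫ t in Ioi (1:ℝ), c * t ^ (-p) ≤ c * ((k:ℝ)/θ) := by
    rw [integral_const_mul, integral_Ioi_rpow_of_lt (by linarith) one_pos]
    have h1 : -(1:ℝ) ^ (-p + 1) / (-p + 1) = 1 / (p - 1) := by
      rw [Real.one_rpow, div_eq_div_iff (by linarith) (by linarith : p - 1 ≠ 0)]
      ring
    rw [h1]
    apply mul_le_mul_of_nonneg_left _ hc0.le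
    rw [div_le_div_iff₀ (by linarith) hθ]
    have h5 : θ / (k:ℝ) * k ≤ (p - 1) * k := by
      apply mul_le_mul_of_nonneg_right hθk hk0.le
    rw [div_mul_cancel₀ _ (ne_of_gt hk0)] at h5
    nlinarith
  -- assemble the lintegral bound
  have hL : ∫⁻ ω, ENNReal.ofReal (f ω) ∂μ ≤ ENNReal.ofReal (1 + c * ((k:ℝ)/θ)) := by
    rw [hlc, ← Ioc_union_Ioi_eq_Ioi (zero_le_one (α := ℝ)),
      lintegral_union measurableSet_Ioi (Ioc_disjoint_Ioi le_rfl)]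
    have hpart1 : ∫⁻ t in Ioc (0:ℝ) 1, μ {ω | t < f ω} ≤ 1 := by
      calc ∫⁻ t in Ioc (0:ℝ) 1, μ {ω | t < f ω} ≤ ∫⁻ _ in Ioc (0:ℝ) 1, 1 :=
            lintegral_mono fun t => prob_le_one
        _ = 1 := by
            rw [setLIntegral_const, one_mul, Real.volume_Ioc]
            norm_num
    have hpart2 : ∫⁻ t in Ioi (1:ℝ), μ {ω | t < f ω} ≤ ENNReal.ofReal (c * ((k:ℝ)/θ)) := by
      calc ∫⁻ t in Ioi (1:ℝ), μ {ω | t < f ω}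
          ≤ ∫⁻ t in Ioi (1:ℝ), ENNReal.ofReal (c * t ^ (-p)) := by
            refine lintegral_mono_ae ?_
            filter_upwards [ae_restrict_mem measurableSet_Ioi] with t ht
            exact hpt t ht
        _ = ENNReal.ofReal (∫ t in Ioi (1:ℝ), c * t ^ (-p)) :=
            (ofReal_integral_eq_lintegral_ofReal hintOn hIoi_nn).symm
        _ ≤ ENNReal.ofReal (c * ((k:ℝ)/θ)) := ENNReal.ofReal_le_ofReal hIval
    calc (∫⁻ t in Ioc (0:ℝ) 1, μ {ω | t < f ω}) + ∫⁻ t in Ioi (1:ℝ), μ {ω | t < f ω}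
        ≤ 1 + ENNReal.ofReal (c * ((k:ℝ)/θ)) := add_le_add hpart1 hpart2
      _ = ENNReal.ofReal (1 + c * ((k:ℝ)/θ)) := by
          rw [ENNReal.ofReal_add (by norm_num) (by positivity), ENNReal.ofReal_one]
  have hfin : Integrable f μ := by
    refine ⟨f_m.aestronglyMeasurable, ?_⟩
    rw [hasFiniteIntegral_iff_norm]
    have heq : ∀ ω, ENNReal.ofReal ‖f ω‖ = ENNReal.ofReal (f ω) := fun ω => by
      rw [Real.norm_of_nonneg (f_nn ω)]
    calc ∫⁻ a, ENNReal.ofReal ‖f a‖ ∂μ = ∫⁻ a, ENNReal.ofReal (f a) ∂μ := by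
          simp_rw [heq]
      _ ≤ ENNReal.ofReal (1 + c * ((k:ℝ)/θ)) := hL
      _ < ⊤ := ENNReal.ofReal_lt_top
  refine ⟨hfin, ?_⟩
  have hieq : ∫ ω, f ω ∂μ = (∫⁻ ω, ENNReal.ofReal (f ω) ∂μ).toReal :=
    integral_eq_lintegral_of_nonneg_ae (Eventually.of_forall f_nn) f_m.aestronglyMeasurable
  calc ∫ ω, f ω ∂μ = (∫⁻ ω, ENNReal.ofReal (f ω) ∂μ).toReal := hieq
    _ ≤ (ENNReal.ofReal (1 + c * ((k:ℝ)/θ))).toReal :=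
        ENNReal.toReal_mono ENNReal.ofReal_ne_top hL
    _ = 1 + c * ((k:ℝ)/θ) := ENNReal.toReal_ofReal (by positivity)
    _ = 1 + K * ((Nat.ceil ((k:ℝ)/θ) + 1).factorial : ℝ)
          * C₂⁻¹ ^ (Nat.ceil ((k:ℝ)/θ) + 1) * ((k:ℝ)/θ) := by rw [hc_def]


lemma nmC_lower {Ω : Type*} [MeasurableSpace Ω]
    (μ : Measure Ω) [IsProbabilityMeasure μ]
    (X : Ω → ℝ) (hXm : Measurable X) (hX0 : ∀ ω, 0 ≤ X ω)
    (θ c₁ C₁ : ℝ) (hθ : 0 < θ) (hc₁ : 0 < c₁) (hC₁ : 0 < C₁)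
    (hnull : μ {ω | X ω = 0} = 0)
    (hFlb : ∀ y : ℝ, 0 < y → y ≤ 1 →
      c₁ * Real.exp (-C₁ * y ^ (-θ)) ≤ (μ {ω | X ω ≤ y}).toReal)
    (k : ℕ) (hk : 1 ≤ k)
    (hint : Integrable (fun ω => X ω ^ (-(k : ℝ))) μ) :
    c₁ * Real.exp (-C₁ * k) * (k:ℝ) ^ ((k:ℝ)/θ) ≤ ∫ ω, X ω ^ (-(k : ℝ)) ∂μ := by
  have hk0 : (0:ℝ) < k := by exact_mod_cast hk
  have hk1 : (1:ℝ) ≤ k := by exact_mod_cast hk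
  set y : ℝ := (k:ℝ) ^ (-θ⁻¹) with hy_def
  have hy0 : 0 < y := Real.rpow_pos_of_pos hk0 _
  have hy1 : y ≤ 1 := Real.rpow_le_one_of_one_le_of_nonpos hk1 (by positivity |> neg_nonpos_of_nonneg)
  have hyθ : y ^ (-θ) = (k:ℝ) := by
    rw [hy_def, ← Real.rpow_mul hk0.le,
      show (-θ⁻¹) * (-θ) = θ⁻¹ * θ by ring, inv_mul_cancel₀ (ne_of_gt hθ), Real.rpow_one]
  have hyk : y ^ (-(k:ℝ)) = (k:ℝ) ^ ((k:ℝ)/θ) := by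
    rw [hy_def, ← Real.rpow_mul hk0.le]
    congr 1
    field_simp
  set s : Set Ω := {ω | 0 < X ω} ∩ {ω | X ω ≤ y} with hs_def
  have hs_meas : MeasurableSet s :=
    (measurableSet_lt measurable_const hXm).inter (hXm measurableSet_Iic)
  have hμs : (μ {ω | X ω ≤ y}) ≤ μ s := by
    have hsub : {ω | X ω ≤ y} ⊆ s ∪ {ω | X ω = 0} := by
      intro ω hω
      rcases lt_or_eq_of_le (hX0 ω) with h | h
      · exact Or.inl ⟨h, hω⟩
      · exact Or.inr h.symm
    calc μ {ω | X ω ≤ y} ≤ μ (s ∪ {ω | X ω = 0}) := measure_mono hsub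
      _ ≤ μ s + μ {ω | X ω = 0} := measure_union_le _ _
      _ = μ s := by rw [hnull, add_zero]
  have hμs' : c₁ * Real.exp (-C₁ * k) ≤ (μ s).toReal := by
    have h1 := hFlb y hy0 hy1
    rw [hyθ] at h1
    exact le_trans h1 (ENNReal.toReal_mono (measure_ne_top μ _) hμs)
  have hconst : ∀ ω ∈ s, (k:ℝ) ^ ((k:ℝ)/θ) ≤ X ω ^ (-(k:ℝ)) := by
    intro ω hω
    obtain ⟨h1, h2⟩ := hω
    rw [← hyk]
    exact Real.rpow_le_rpow_of_nonpos h1 h2 (neg_nonpos_of_nonneg hk0.le)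
  have hlow : (k:ℝ) ^ ((k:ℝ)/θ) * (μ s).toReal ≤ ∫ ω in s, X ω ^ (-(k:ℝ)) ∂μ :=
    setIntegral_ge_of_const_le_real hs_meas (measure_ne_top μ _) hconst hint.integrableOn
  have hle : ∫ ω in s, X ω ^ (-(k:ℝ)) ∂μ ≤ ∫ ω, X ω ^ (-(k:ℝ)) ∂μ :=
    setIntegral_le_integral hint
      (Eventually.of_forall fun ω => Real.rpow_nonneg (hX0 ω) _)
  calc c₁ * Real.exp (-C₁ * k) * (k:ℝ) ^ ((k:ℝ)/θ)
      ≤ (μ s).toReal * (k:ℝ) ^ ((k:ℝ)/θ) := by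
        apply mul_le_mul_of_nonneg_right hμs' (by positivity)
    _ = (k:ℝ) ^ ((k:ℝ)/θ) * (μ s).toReal := by ring
    _ ≤ ∫ ω in s, X ω ^ (-(k:ℝ)) ∂μ := hlow
    _ ≤ ∫ ω, X ω ^ (-(k:ℝ)) ∂μ := hle


set_option maxHeartbeats 1600000 in
theorem negative_moments_asymptotics' {Ω : Type*} [MeasurableSpace Ω]
    (μ : Measure Ω) [IsProbabilityMeasure μ]
    (X : Ω → ℝ) (hXm : Measurable X) (hX0 : ∀ ω, 0 ≤ X ω)
    (θ c₁ C₁ K C₂ : ℝ) (hθ : 0 < θ) (hc₁ : 0 < c₁) (hC₁ : 0 < C₁)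
    (hK : 0 < K) (hC₂ : 0 < C₂)
    (hnull : μ {ω | X ω = 0} = 0)
    (hB' : ∀ k : ℕ, 1 ≤ k →
      Integrable (fun ω => X ω ^ (-(k : ℝ))) μ ∧
      ∫ ω, X ω ^ (-(k : ℝ)) ∂μ ≤
        1 + K * ((Nat.ceil ((k:ℝ)/θ) + 1).factorial : ℝ)
          * C₂⁻¹ ^ (Nat.ceil ((k:ℝ)/θ) + 1) * ((k:ℝ)/θ))
    (hC' : ∀ k : ℕ, 1 ≤ k → Integrable (fun ω => X ω ^ (-(k : ℝ))) μ →
      c₁ * Real.exp (-C₁ * k) * (k:ℝ) ^ ((k:ℝ)/θ) ≤ ∫ ω, X ω ^ (-(k : ℝ)) ∂μ) :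
    (fun k : ℕ =>
        Real.log (∫ ω, (X ω) ^ (-(k : ℝ)) ∂μ) - ((k : ℝ) / θ) * Real.log k)
      =o[atTop] (fun k : ℕ => (k : ℝ) * Real.log k) := by
  obtain ⟨c₀, hc₀_def⟩ : ∃ c₀ : ℝ, c₀ = 1/θ + 2 := ⟨_, rfl⟩
  have h1θ : 0 < 1/θ := by positivity
  have hc₀1 : (1:ℝ) ≤ c₀ := by rw [hc₀_def]; linarith
  have hc₀0 : (0:ℝ) < c₀ := lt_of_lt_of_le one_pos hc₀1
  have hlc₀ : 0 ≤ Real.log c₀ := Real.log_nonneg hc₀1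
  obtain ⟨A₂, hA₂_def⟩ : ∃ A₂ : ℝ, A₂ = |Real.log K| + c₀ * |Real.log C₂⁻¹| + 1
      + |Real.log θ| + (Real.log c₀)/θ + 2*Real.log c₀ + 2 := ⟨_, rfl⟩
  have hA₂0 : 0 ≤ A₂ := by
    rw [hA₂_def]
    have := abs_nonneg (Real.log K)
    have := abs_nonneg (Real.log C₂⁻¹)
    have := abs_nonneg (Real.log θ)
    have h1 : 0 ≤ c₀*|Real.log C₂⁻¹| := by positivity
    have h2 : 0 ≤ (Real.log c₀)/θ := by positivity
    linarith
  obtain ⟨A, hA_def⟩ : ∃ A : ℝ, A = |Real.log c₁| + C₁ + Real.log 2 + A₂ + 1 := ⟨_, rfl⟩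
  have hlog2 : 0 ≤ Real.log 2 := Real.log_nonneg one_le_two
  have hA1 : (1:ℝ) ≤ A := by
    rw [hA_def]
    have := abs_nonneg (Real.log c₁)
    linarith
  have key : ∀ k : ℕ, 1 ≤ k →
      |Real.log (∫ ω, (X ω) ^ (-(k : ℝ)) ∂μ) - ((k : ℝ) / θ) * Real.log k| ≤ A * k := by
    intro k hk
    have hk0 : (0:ℝ) < k := by exact_mod_cast hk
    have hk1 : (1:ℝ) ≤ k := by exact_mod_cast hk
    have hlogk0 : 0 ≤ Real.log k := Real.log_nonneg hk1
    have hlogkk : Real.log k ≤ k := by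
      have := Real.log_le_sub_one_of_pos hk0
      linarith
    obtain ⟨hint, hub⟩ := hB' k hk
    have hlb := hC' k hk hint
    obtain ⟨m, hm_def⟩ : ∃ m : ℕ, m = Nat.ceil ((k:ℝ)/θ) + 1 := ⟨_, rfl⟩
    rw [← hm_def] at hub
    have hm1 : 1 ≤ m := by omega
    have hmR1 : (1:ℝ) ≤ m := by exact_mod_cast hm1
    have hmR0 : (0:ℝ) < m := lt_of_lt_of_le one_pos hmR1
    have hmks : (m:ℝ) ≤ (k:ℝ)/θ + 2 := by
      have h1 := (Nat.ceil_lt_add_one (show (0:ℝ) ≤ (k:ℝ)/θ by positivity)).le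
      have hc : (m:ℝ) = (⌈(k:ℝ)/θ⌉₊:ℝ) + 1 := by rw [hm_def]; push_cast; ring
      linarith
    have hmc₀k : (m:ℝ) ≤ c₀ * k := by
      have he : (k:ℝ)/θ = 1/θ * k := by ring
      rw [hc₀_def]
      rw [he] at hmks
      nlinarith
    obtain ⟨B, hB_def⟩ : ∃ B : ℝ, B = K * (m.factorial:ℝ) * C₂⁻¹ ^ m * ((k:ℝ)/θ) := ⟨_, rfl⟩
    rw [← hB_def] at hub
    have hfact_pos : (0:ℝ) < (m.factorial:ℝ) := by exact_mod_cast m.factorial_pos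
    have hB0 : 0 < B := by
      rw [hB_def]
      exact mul_pos (mul_pos (mul_pos hK hfact_pos)
        (pow_pos (inv_pos.mpr hC₂) m)) (div_pos hk0 hθ)
    have hub' : ∫ ω, (X ω) ^ (-(k : ℝ)) ∂μ ≤ 1 + B := hub
    have hη_pos : 0 < ∫ ω, (X ω) ^ (-(k : ℝ)) ∂μ :=
      lt_of_lt_of_le (by positivity) hlb
    -- lower bound on log
    have hlow : Real.log c₁ - C₁ * k + ((k:ℝ)/θ) * Real.log k
        ≤ Real.log (∫ ω, (X ω) ^ (-(k : ℝ)) ∂μ) := by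
      have h1 := Real.log_le_log (by positivity) hlb
      rw [Real.log_mul (by positivity) (ne_of_gt (Real.rpow_pos_of_pos hk0 _)),
          Real.log_mul (ne_of_gt hc₁) (Real.exp_ne_zero _),
          Real.log_exp, Real.log_rpow hk0] at h1
      linarith
    -- upper bound on log
    have hup : Real.log (∫ ω, (X ω) ^ (-(k : ℝ)) ∂μ)
        ≤ Real.log 2 + max 0 (Real.log B) := by
      rcases le_or_gt B 1 with hB1 | hB1
      · have h2 := Real.log_le_log hη_pos (le_trans hub' (by linarith : 1 + B ≤ 2))
        have h3 : (0:ℝ) ≤ max 0 (Real.log B) := le_max_left _ _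
        linarith
      · have h2 := Real.log_le_log hη_pos (le_trans hub' (by linarith : 1 + B ≤ 2 * B))
        rw [Real.log_mul two_ne_zero (ne_of_gt hB0)] at h2
        have h3 : Real.log B ≤ max 0 (Real.log B) := le_max_right _ _
        linarith
    have hlogB : Real.log B ≤ ((k:ℝ)/θ) * Real.log k + A₂ * k := by
      have e1 : Real.log B = Real.log K + Real.log (m.factorial:ℝ)
          + (m:ℝ) * Real.log C₂⁻¹ + (Real.log k - Real.log θ) := by
        rw [hB_def,
          Real.log_mul (by positivity) (ne_of_gt (by positivity : (0:ℝ) < (k:ℝ)/θ)),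
          Real.log_mul (by positivity) (by positivity : C₂⁻¹ ^ m ≠ 0),
          Real.log_mul (ne_of_gt hK) (ne_of_gt hfact_pos),
          Real.log_pow, Real.log_div (ne_of_gt hk0) (ne_of_gt hθ)]
      have b1 : Real.log K ≤ |Real.log K| * k :=
        le_trans (le_abs_self _) (le_mul_of_one_le_right (abs_nonneg _) hk1)
      have b3 : (m:ℝ) * Real.log C₂⁻¹ ≤ c₀ * |Real.log C₂⁻¹| * k := by
        calc (m:ℝ) * Real.log C₂⁻¹ ≤ (m:ℝ) * |Real.log C₂⁻¹| :=
              mul_le_mul_of_nonneg_left (le_abs_self _) (by positivity)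
          _ ≤ (c₀*k) * |Real.log C₂⁻¹| :=
              mul_le_mul_of_nonneg_right hmc₀k (abs_nonneg _)
          _ = c₀ * |Real.log C₂⁻¹| * k := by ring
      have b4 : Real.log k - Real.log θ ≤ (1 + |Real.log θ|) * k := by
        have h1 := neg_abs_le (Real.log θ)
        have h2 : |Real.log θ| ≤ |Real.log θ| * k :=
          le_mul_of_one_le_right (abs_nonneg _) hk1
        nlinarith
      have b5 : Real.log (m.factorial:ℝ) ≤ (m:ℝ) * Real.log m := by
        have h1 : (m.factorial:ℝ) ≤ (m:ℝ)^m := by exact_mod_cast m.factorial_le_pow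
        have h2 := Real.log_le_log hfact_pos h1
        rwa [Real.log_pow] at h2
      have b6 : Real.log (m:ℝ) ≤ Real.log c₀ + Real.log k := by
        have h1 := Real.log_le_log hmR0 hmc₀k
        rwa [Real.log_mul (ne_of_gt hc₀0) (ne_of_gt hk0)] at h1
      have b7 : 0 ≤ Real.log (m:ℝ) := Real.log_nonneg hmR1
      have b8 : (m:ℝ) * Real.log m ≤ ((k:ℝ)/θ + 2) * (Real.log c₀ + Real.log k) :=
        mul_le_mul hmks b6 b7 (by positivity)
      have b9 : (m:ℝ) * Real.log m ≤
          ((k:ℝ)/θ)*Real.log k + ((Real.log c₀)/θ + 2*Real.log c₀ + 2)*k := by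
        have h1 : Real.log c₀ ≤ Real.log c₀ * k := le_mul_of_one_le_right hlc₀ hk1
        have h2 : ((k:ℝ)/θ) * Real.log c₀ = (Real.log c₀ / θ) * k := by ring
        nlinarith [b8, h1, hlogkk]
      rw [e1, hA₂_def]
      linarith
    rw [abs_le]
    constructor
    · have h1 : -|Real.log c₁| ≤ Real.log c₁ := neg_abs_le _
      have h2 : |Real.log c₁| ≤ |Real.log c₁| * k :=
        le_mul_of_one_le_right (abs_nonneg _) hk1
      have h3 : (|Real.log c₁| + C₁) * k ≤ A * k := by
        apply mul_le_mul_of_nonneg_right _ hk0.le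
        rw [hA_def]; linarith
      nlinarith [hlow, h1, h2, h3]
    · have h1 : max 0 (Real.log B) ≤ ((k:ℝ)/θ) * Real.log k + A₂ * k := by
        apply max_le _ hlogB
        positivity
      have h2 : Real.log 2 ≤ Real.log 2 * k := le_mul_of_one_le_right hlog2 hk1
      have h3 : (Real.log 2 + A₂) * k ≤ A * k := by
        apply mul_le_mul_of_nonneg_right _ hk0.le
        rw [hA_def]
        have := abs_nonneg (Real.log c₁)
        linarith
      nlinarith
  -- conclude
  rw [isLittleO_iff]
  intro ε hε
  have h1 : Tendsto (fun k : ℕ => Real.log k) atTop atTop :=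
    Real.tendsto_log_atTop.comp tendsto_natCast_atTop_atTop
  have hA0 : (0:ℝ) < A := lt_of_lt_of_le one_pos hA1
  filter_upwards [h1.eventually_ge_atTop (A/ε), eventually_ge_atTop 1] with k hk2 hk3
  have hk0 : (0:ℝ) < k := by exact_mod_cast hk3
  have hA_le : A ≤ ε * Real.log k := by
    rw [div_le_iff₀ hε] at hk2
    linarith
  rw [Real.norm_eq_abs, Real.norm_eq_abs]
  calc |Real.log (∫ ω, (X ω) ^ (-(k : ℝ)) ∂μ) - ((k : ℝ) / θ) * Real.log k|
      ≤ A * k := key k hk3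
    _ ≤ (ε * Real.log k) * k := mul_le_mul_of_nonneg_right hA_le hk0.le
    _ = ε * ((k:ℝ) * Real.log k) := by ring
    _ ≤ ε * |(k:ℝ) * Real.log k| := mul_le_mul_of_nonneg_left (le_abs_self _) hε.le

set_option maxHeartbeats 1600000 in
/-- If the cdf of a nonnegative random variable `X` satisfies two-sided bounds
`c₁ exp(-C₁ y^{-θ}) ≤ F(y) ≤ K exp(-C₂ y^{-θ})` for `0 < y ≤ 1`, then the negative
moments `η_k = E[X^{-k}]` satisfy `log η_k = (k/θ) log k + o(k log k)`. -/
theorem negative_moments_asymptotics {Ω : Type*} [MeasurableSpace Ω]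
    (μ : Measure Ω) [IsProbabilityMeasure μ]
    (X : Ω → ℝ) (hXm : Measurable X) (hX0 : ∀ ω, 0 ≤ X ω)
    (θ c₁ C₁ K C₂ : ℝ) (hθ : 0 < θ) (hc₁ : 0 < c₁) (hC₁ : 0 < C₁)
    (hK : 0 < K) (hC₂ : 0 < C₂)
    (hFub : ∀ y : ℝ, 0 < y → y ≤ 1 →
      (μ {ω | X ω ≤ y}).toReal ≤ K * Real.exp (-C₂ * y ^ (-θ)))
    (hFlb : ∀ y : ℝ, 0 < y → y ≤ 1 →
      c₁ * Real.exp (-C₁ * y ^ (-θ)) ≤ (μ {ω | X ω ≤ y}).toReal) :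
    (fun k : ℕ =>
        Real.log (∫ ω, (X ω) ^ (-(k : ℝ)) ∂μ) - ((k : ℝ) / θ) * Real.log k)
      =o[atTop] (fun k : ℕ => (k : ℝ) * Real.log k) := by
  have hnull := nmA_null μ X θ K C₂ hθ hK hC₂ hFub
  exact negative_moments_asymptotics' μ X hXm hX0 θ c₁ C₁ K C₂ hθ hc₁ hC₁ hK hC₂ hnull
    (fun k hk => nmB_upper μ X hXm hX0 θ K C₂ hθ hK hC₂ hFub k hk)
    (fun k hk hint => nmC_lower μ X hXm hX0 θ c₁ C₁ hθ hc₁ hC₁ hnull hFlb k hk hint)
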